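/- Let H be a Hermitian (or symmetric) n×n matrix whose spectrum is contained in a set 𝓔 ⊂ ℝ, and let f : 𝓔 → ℂ be bounded. For indices i, j, let d(i,j) denote the graph distance between i and j in the graph of H. Then |f(H)(i,j)| ≤ inf over polynomials p of degree at most d(i,j)−1 of sup_{x ∈ 𝓔} |f(x) − p(x)|. -/

import Mathlib

open Matrix

/-- The (simple) graph of a matrix `H`: an edge between distinct `u, v` whenever
`H` has a nonzero entry at `(u,v)` or `(v,u)`. -/
def matGraph {n : ℕ} (H : Matrix (Fin n) (Fin n) ℂ) : SimpleGraph (Fin n) where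
  Adj u v := u ≠ v ∧ (H u v ≠ 0 ∨ H v u ≠ 0)
  symm := ⟨fun _ _ h => ⟨h.1.symm, h.2.symm⟩⟩
  loopless := ⟨fun _ h => h.1 rfl⟩

/-- If a power of `H` has a nonzero entry, there is a short walk in the graph of `H`. -/
lemma pow_entry_walk {n : ℕ} (H : Matrix (Fin n) (Fin n) ℂ) (i : Fin n) :
    ∀ (d : ℕ) (j : Fin n), (H ^ d) i j ≠ 0 → ∃ w : (matGraph H).Walk i j, w.length ≤ d := by
  intro d
  induction d with
  | zero =>
    intro j h
    rw [pow_zero, Matrix.one_apply] at h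
    have hij : i = j := by by_contra hne; simp [hne] at h
    subst hij
    exact ⟨SimpleGraph.Walk.nil, le_rfl⟩
  | succ d ih =>
    intro j h
    rw [pow_succ, Matrix.mul_apply] at h
    obtain ⟨k, -, hk⟩ := Finset.exists_ne_zero_of_sum_ne_zero h
    have hk1 : (H ^ d) i k ≠ 0 := fun hz => hk (by rw [hz, zero_mul])
    have hk2 : H k j ≠ 0 := fun hz => hk (by rw [hz, mul_zero])
    obtain ⟨w, hw⟩ := ih k hk1
    by_cases hkj : k = j
    · subst hkj
      exact ⟨w, hw.trans (Nat.le_succ d)⟩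
    · refine ⟨w.concat (show (matGraph H).Adj k j from And.intro hkj (Or.inl hk2)), ?_⟩
      rw [SimpleGraph.Walk.length_concat]
      omega

/-- Entry of a conjugated diagonal matrix. -/
lemma conj_diag_entry {n : ℕ} (U : Matrix (Fin n) (Fin n) ℂ) (g : Fin n → ℂ) (i j : Fin n) :
    (U * Matrix.diagonal g * star U) i j = ∑ k, U i k * g k * star (U j k) := by
  rw [Matrix.mul_apply]
  simp only [Matrix.mul_diagonal, Matrix.star_apply]

/-- Entrywise bound on matrix functions via polynomial
approximation: if `H` is Hermitian with all eigenvalues in `𝓔`, `f : ℝ → ℂ`, and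
the graph distance from `i` to `j` is at least `m`, then for every polynomial
`p` of degree ≤ `m − 1` and every uniform bound `C` on `|f − p|` over `𝓔`, the
entry of `f(H) = U diag(f(λ)) U*` satisfies `|f(H)(i,j)| ≤ C`. -/
theorem matrix_function_entry_bound {n : ℕ} (H : Matrix (Fin n) (Fin n) ℂ)
    (hH : H.IsHermitian) (𝓔 : Set ℝ) (hE : IsCompact 𝓔)
    (hspec : ∀ k : Fin n, hH.eigenvalues k ∈ 𝓔)
    (f : ℝ → ℂ) (i j : Fin n) (m : ℕ)
    (hd : ∀ w : (matGraph H).Walk i j, m ≤ w.length)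
    (p : Polynomial ℂ) (hp : p.natDegree < m)
    (C : ℝ) (hC : ∀ x ∈ 𝓔, ‖f x - p.eval (x : ℂ)‖ ≤ C) :
    ‖((hH.eigenvectorUnitary : Matrix (Fin n) (Fin n) ℂ) *
        Matrix.diagonal (fun k => f (hH.eigenvalues k)) *
        star (hH.eigenvectorUnitary : Matrix (Fin n) (Fin n) ℂ)) i j‖ ≤ C := by
  set U : Matrix (Fin n) (Fin n) ℂ := (hH.eigenvectorUnitary : Matrix (Fin n) (Fin n) ℂ) with hUdef
  have hU : U * star U = 1 := Matrix.mem_unitaryGroup_iff.mp hH.eigenvectorUnitary.2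
  have hUs : star U * U = 1 := Matrix.mem_unitaryGroup_iff'.mp hH.eigenvectorUnitary.2
  -- powers of H
  have hpow : ∀ d : ℕ, H ^ d =
      U * Matrix.diagonal (fun k => ((hH.eigenvalues k : ℝ) : ℂ) ^ d) * star U := by
    intro d
    induction d with
    | zero =>
      simp only [pow_zero]
      rw [show Matrix.diagonal (fun _ : Fin n => (1 : ℂ)) = 1 from Matrix.diagonal_one,
        mul_one, hU]
    | succ d ih =>
      have hst := hH.spectral_theorem
      calc H ^ (d + 1) = H ^ d * H := pow_succ H d
        _ = (U * Matrix.diagonal (fun k => ((hH.eigenvalues k : ℝ) : ℂ) ^ d) * star U) *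
            (U * Matrix.diagonal (RCLike.ofReal ∘ hH.eigenvalues) * star U) := by
            rw [ih]; congr 1
        _ = U * (Matrix.diagonal (fun k => ((hH.eigenvalues k : ℝ) : ℂ) ^ d) *
            Matrix.diagonal (RCLike.ofReal ∘ hH.eigenvalues)) * star U := by
            simp only [Matrix.mul_assoc]
            rw [← Matrix.mul_assoc (star U) U, hUs, Matrix.one_mul]
        _ = U * Matrix.diagonal (fun k => ((hH.eigenvalues k : ℝ) : ℂ) ^ (d + 1)) * star U := by
            rw [Matrix.diagonal_mul_diagonal]
            have : (fun k => ((hH.eigenvalues k : ℝ) : ℂ) ^ d *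
                (RCLike.ofReal ∘ hH.eigenvalues) k)
                = fun k => ((hH.eigenvalues k : ℝ) : ℂ) ^ (d + 1) := by
              funext k
              simp [pow_succ]
            rw [this]
  -- each power entry vanishes
  have hTd : ∀ d : ℕ, d < m →
      ∑ k, U i k * ((hH.eigenvalues k : ℝ) : ℂ) ^ d * star (U j k) = 0 := by
    intro d hdm
    rw [← conj_diag_entry, ← hpow d]
    by_contra hne
    obtain ⟨w, hw⟩ := pow_entry_walk H i d j hne
    exact absurd (hd w) (by omega)
  -- p evaluated along eigenvalues vanishes
  have hT : ∑ k, U i k * p.eval ((hH.eigenvalues k : ℝ) : ℂ) * star (U j k) = 0 := by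
    have heval : ∀ k : Fin n, p.eval ((hH.eigenvalues k : ℝ) : ℂ) =
        ∑ d ∈ Finset.range m, p.coeff d * ((hH.eigenvalues k : ℝ) : ℂ) ^ d := fun k =>
      Polynomial.eval_eq_sum_range' hp _
    simp only [heval, Finset.sum_mul, Finset.mul_sum]
    rw [Finset.sum_comm]
    refine Finset.sum_eq_zero fun d hd' => ?_
    have hz := hTd d (Finset.mem_range.mp hd')
    calc ∑ k, U i k * (p.coeff d * ((hH.eigenvalues k : ℝ) : ℂ) ^ d) * star (U j k)
        = p.coeff d * ∑ k, U i k * ((hH.eigenvalues k : ℝ) : ℂ) ^ d * star (U j k) := by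
          rw [Finset.mul_sum]; exact Finset.sum_congr rfl fun k _ => by ring
      _ = 0 := by rw [hz, mul_zero]
  -- row norms
  have hrow : ∀ r : Fin n, ∑ k, ‖U r k‖ ^ 2 = 1 := by
    intro r
    have h1 : (U * star U) r r = 1 := by rw [hU]; simp [Matrix.one_apply]
    rw [Matrix.mul_apply] at h1
    have h2 : ∑ k, ((‖U r k‖ ^ 2 : ℝ) : ℂ) = 1 := by
      rw [← h1]
      refine Finset.sum_congr rfl fun k _ => ?_
      rw [Matrix.star_apply]
      rw [show (star (U r k)) = starRingEnd ℂ (U r k) from rfl, Complex.mul_conj']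
      push_cast
      norm_num
    exact_mod_cast h2
  have hC0 : 0 ≤ C := le_trans (norm_nonneg _) (hC _ (hspec i))
  have hab : ∑ k, ‖U i k‖ * ‖U j k‖ ≤ 1 := by
    have h2 := Finset.sum_mul_sq_le_sq_mul_sq Finset.univ (fun k => ‖U i k‖) (fun k => ‖U j k‖)
    have h3 : 0 ≤ ∑ k, ‖U i k‖ * ‖U j k‖ :=
      Finset.sum_nonneg fun k _ => mul_nonneg (norm_nonneg _) (norm_nonneg _)
    rw [hrow i, hrow j] at h2
    nlinarith
  rw [conj_diag_entry]
  have hsplit : ∑ k, U i k * f (hH.eigenvalues k) * star (U j k)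
      = ∑ k, U i k * (f (hH.eigenvalues k) - p.eval ((hH.eigenvalues k : ℝ) : ℂ)) * star (U j k)
        + ∑ k, U i k * p.eval ((hH.eigenvalues k : ℝ) : ℂ) * star (U j k) := by
    rw [← Finset.sum_add_distrib]
    exact Finset.sum_congr rfl fun k _ => by ring
  rw [hsplit, hT, add_zero]
  calc ‖∑ k, U i k * (f (hH.eigenvalues k) - p.eval ((hH.eigenvalues k : ℝ) : ℂ)) * star (U j k)‖
      ≤ ∑ k, ‖U i k * (f (hH.eigenvalues k) - p.eval ((hH.eigenvalues k : ℝ) : ℂ)) * star (U j k)‖ :=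
        norm_sum_le _ _
    _ ≤ ∑ k, C * (‖U i k‖ * ‖U j k‖) := by
        refine Finset.sum_le_sum fun k _ => ?_
        rw [norm_mul, norm_mul, norm_star]
        have hk := hC _ (hspec k)
        nlinarith [mul_nonneg (norm_nonneg (U i k)) (norm_nonneg (U j k)),
          norm_nonneg (U i k), norm_nonneg (U j k),
          norm_nonneg (f (hH.eigenvalues k) - p.eval ((hH.eigenvalues k : ℝ) : ℂ))]
    _ = C * ∑ k, ‖U i k‖ * ‖U j k‖ := (Finset.mul_sum _ _ _).symm
    _ ≤ C * 1 := mul_le_mul_of_nonneg_left hab hC0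
    _ = C := mul_one C
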